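/- Consider the linear program max Σ_a w_a ν_a subject to ν_a ≥ 0, Σ_a ν_a = m·ρ_d, and m·ρ_n - Σ_a τ̃_a ν_a ≥ 0, where for a given feasible point f* with Σ_a f*_a = m·ρ_d, f*_a ≥ 0, and average payoff w̄ = Σ_a f*_a w_a / (m ρ_d), the tolls are defined by τ̃_a = ρ_n/ρ_d + α(w_a - w̄) when f*_a > 0 and τ̃_a ≥ ρ_n/ρ_d + α(w_a - w̄) when f*_a = 0, for some α > 0. Then f* is an optimal solution of the LP. -/

import Mathlib

/-- Optimality of `f*` in the toll LP: with tolls `τ̃_a = ρn/ρd + α (w_a - w̄)` on the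
support of `f*` (and `τ̃_a ≥ ρn/ρd + α (w_a - w̄)` off the support), the feasible point
`f*` maximizes `∑_a w_a ν_a` over all `ν ≥ 0` with `∑_a ν_a = m ρd` and
`m ρn - ∑_a τ̃_a ν_a ≥ 0`. -/
theorem stmt_10 {A : Type*} [Fintype A]
    (m ρd ρn α : ℝ) (hm : 0 < m) (hρd : 0 < ρd) (hρn : 0 < ρn) (hα : 0 < α)
    (w τ f : A → ℝ) (hf0 : ∀ a, 0 ≤ f a) (hfsum : ∑ a, f a = m * ρd)
    (wbar : ℝ) (hwbar : wbar = (∑ a, f a * w a) / (m * ρd))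
    (hτ1 : ∀ a, 0 < f a → τ a = ρn / ρd + α * (w a - wbar))
    (hτ2 : ∀ a, f a = 0 → ρn / ρd + α * (w a - wbar) ≤ τ a) :
    ∀ ν : A → ℝ, (∀ a, 0 ≤ ν a) → (∑ a, ν a = m * ρd) →
      0 ≤ m * ρn - ∑ a, τ a * ν a →
      ∑ a, w a * ν a ≤ ∑ a, w a * f a := by
  intro ν hν0 hνsum hνtoll
  have hmρd : m * ρd ≠ 0 := by positivity
  -- average payoff identity
  have hwf : ∑ a, f a * w a = wbar * (m * ρd) := by
    rw [hwbar]; field_simp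
  -- dual feasibility: w a ≤ τ a / α + (wbar - ρn / (ρd * α))
  have hdual : ∀ a, w a ≤ τ a / α + (wbar - ρn / (ρd * α)) := by
    intro a
    have h : ρn / ρd + α * (w a - wbar) ≤ τ a := by
      rcases eq_or_lt_of_le (hf0 a) with h0 | h0
      · exact hτ2 a h0.symm
      · exact le_of_eq (hτ1 a h0).symm
    have hα' : α ≠ 0 := ne_of_gt hα
    have hρd' : ρd ≠ 0 := ne_of_gt hρd
    have h2 : ρn / (ρd * α) * α = ρn / ρd := by field_simp
    rw [div_add' _ _ _ hα', le_div_iff₀ hα]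
    nlinarith [h, h2]
  -- value of f* : ∑ τ a * f a = m * ρn
  have hτf : ∑ a, τ a * f a = m * ρn := by
    have : ∑ a, τ a * f a = ∑ a, (ρn / ρd + α * (w a - wbar)) * f a := by
      refine Finset.sum_congr rfl fun a _ => ?_
      rcases eq_or_lt_of_le (hf0 a) with h0 | h0
      · rw [← h0]; ring
      · rw [hτ1 a h0]
    rw [this]
    have expand : ∑ a, (ρn / ρd + α * (w a - wbar)) * f a
        = (ρn / ρd) * (∑ a, f a) + α * (∑ a, f a * w a) - α * wbar * (∑ a, f a) := by
      rw [Finset.mul_sum, Finset.mul_sum, Finset.mul_sum]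
      rw [← Finset.sum_add_distrib, ← Finset.sum_sub_distrib]
      refine Finset.sum_congr rfl fun a _ => by ring
    rw [expand, hfsum, hwf]
    field_simp
    ring
  -- the bound
  have key : ∑ a, w a * ν a ≤ ∑ a, (τ a / α + (wbar - ρn / (ρd * α))) * ν a := by
    refine Finset.sum_le_sum fun a _ => mul_le_mul_of_nonneg_right (hdual a) (hν0 a)
  have expand2 : ∑ a, (τ a / α + (wbar - ρn / (ρd * α))) * ν a
      = (1 / α) * (∑ a, τ a * ν a) + (wbar - ρn / (ρd * α)) * (∑ a, ν a) := by
    rw [Finset.mul_sum, Finset.mul_sum, ← Finset.sum_add_distrib]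
    refine Finset.sum_congr rfl fun a _ => by ring
  have hτν : ∑ a, τ a * ν a ≤ m * ρn := by linarith
  have hbound : (1 / α) * (∑ a, τ a * ν a) + (wbar - ρn / (ρd * α)) * (∑ a, ν a)
      ≤ wbar * (m * ρd) := by
    have h1 : (1 / α) * (∑ a, τ a * ν a) ≤ (1 / α) * (m * ρn) :=
      mul_le_mul_of_nonneg_left hτν (by positivity)
    rw [hνsum]
    have : (1 / α) * (m * ρn) + (wbar - ρn / (ρd * α)) * (m * ρd) = wbar * (m * ρd) := by
      field_simp
      ring
    linarith
  have hwfcomm : ∑ a, w a * f a = wbar * (m * ρd) := by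
    rw [← hwf]; exact Finset.sum_congr rfl fun a _ => mul_comm _ _
  rw [hwfcomm]
  calc ∑ a, w a * ν a ≤ _ := key
    _ = _ := expand2
    _ ≤ wbar * (m * ρd) := hbound
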